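/- Let ((U_t, V_t))_{t∈ℤ} be an i.i.d. sequence of pairs, where U_t is a random vector in ℝᵈ and V_t a real random variable, with 𝔼[‖U₀‖²] < ∞ and 𝔼[V₀²] < 1. Then for each t ∈ ℤ the series Y_t := Σ_{j=0}^{∞} (∏_{i=1}^{j} V_{t−i}) · U_{t−j−1} converges almost surely and in L², 𝔼[‖Y_t‖²] < ∞, and almost surely Y_{t+1} = U_t + V_t · Y_t for every t ∈ ℤ. -/

import Mathlib

open MeasureTheory ProbabilityTheory Filter

lemma lintegral_finset_prod_of_iIndepFun {Ω ι : Type*} [MeasurableSpace Ω] {μ : Measure Ω}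
    [IsProbabilityMeasure μ] {f : ι → Ω → ENNReal}
    (hindep : iIndepFun f μ) (hf : ∀ i, Measurable (f i))
    (s : Finset ι) :
    ∫⁻ ω, ∏ i ∈ s, f i ω ∂μ = ∏ i ∈ s, ∫⁻ ω, f i ω ∂μ := by
  classical
  induction s using Finset.cons_induction with
  | empty => simp
  | cons i s hi ih =>
    simp only [Finset.prod_cons]
    have hprod : Measurable fun ω => ∏ j ∈ s, f j ω :=
      Finset.measurable_prod _ fun j _ => hf j
    have hind : IndepFun (f i) (fun ω => ∏ j ∈ s, f j ω) μ :=
      by simpa [Finset.prod_fn] using (hindep.indepFun_finsetProd_of_notMem hf hi).symm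
    calc ∫⁻ ω, f i ω * ∏ j ∈ s, f j ω ∂μ
        = (∫⁻ ω, f i ω ∂μ) * ∫⁻ ω, ∏ j ∈ s, f j ω ∂μ :=
          lintegral_mul_eq_lintegral_mul_lintegral_of_indepFun (hf i) hprod hind
      _ = _ := by rw [ih]

noncomputable def sreTerm {Ω : Type*} {d : ℕ} (U : ℤ → Ω → EuclideanSpace ℝ (Fin d))
    (V : ℤ → Ω → ℝ) (t : ℤ) (j : ℕ) (ω : Ω) : EuclideanSpace ℝ (Fin d) :=
  (∏ i ∈ Finset.Icc 1 j, V (t - i) ω) • U (t - (j + 1)) ω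

lemma sre_moment {Ω : Type*} [MeasurableSpace Ω] {μ : Measure Ω} [IsProbabilityMeasure μ]
    {d : ℕ} {U : ℤ → Ω → EuclideanSpace ℝ (Fin d)} {V : ℤ → Ω → ℝ}
    (hmeas : ∀ t : ℤ, Measurable fun ω => (U t ω, V t ω))
    (hindep : iIndepFun (fun t ω => (U t ω, V t ω)) μ)
    (hident : ∀ t : ℤ, IdentDistrib (fun ω => (U t ω, V t ω)) (fun ω => (U 0 ω, V 0 ω)) μ μ)
    (t : ℤ) (j : ℕ) :
    ∫⁻ ω, (‖sreTerm U V t j ω‖₊ : ENNReal) ^ 2 ∂μ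
      = (∫⁻ ω, (‖V 0 ω‖₊ : ENNReal) ^ 2 ∂μ) ^ j * ∫⁻ ω, (‖U 0 ω‖₊ : ENNReal) ^ 2 ∂μ := by
  classical
  set u : ℤ := t - (j + 1) with hu
  set S : Finset ℤ := (Finset.Icc 1 j).image (fun i : ℕ => t - (i : ℤ)) with hS
  -- the mixed family
  set g : ℤ → (EuclideanSpace ℝ (Fin d) × ℝ) → ENNReal := fun s p =>
    if s = u then (‖p.1‖₊ : ENNReal) ^ 2 else (‖p.2‖₊ : ENNReal) ^ 2 with hg
  have hgm : ∀ s, Measurable (g s) := by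
    intro s
    by_cases h : s = u <;> simp only [hg, h, if_true, if_false] <;>
      [exact (measurable_fst.nnnorm.coe_nnreal_ennreal.pow_const 2);
       exact (measurable_snd.nnnorm.coe_nnreal_ennreal.pow_const 2)]
  set F : ℤ → Ω → ENNReal := fun s => g s ∘ fun ω => (U s ω, V s ω) with hF
  have hFindep : iIndepFun F μ := hindep.comp g hgm
  have hFm : ∀ s, Measurable (F s) := fun s => (hgm s).comp (hmeas s)
  have husm : u ∉ S := by
    simp only [hS, Finset.mem_image, Finset.mem_Icc]
    rintro ⟨i, ⟨hi1, hi2⟩, hieq⟩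
    rw [hu] at hieq
    omega
  have hinj : Set.InjOn (fun i : ℕ => t - (i : ℤ)) (Finset.Icc 1 j) := by
    intro a _ b _ h
    simp only at h
    omega
  -- pointwise identity
  have hpt : ∀ ω, (‖sreTerm U V t j ω‖₊ : ENNReal) ^ 2 = ∏ s ∈ insert u S, F s ω := by
    intro ω
    rw [Finset.prod_insert husm]
    have h1 : F u ω = (‖U u ω‖₊ : ENNReal) ^ 2 := by simp [hF, hg]
    have h2 : ∀ s ∈ S, F s ω = (‖V s ω‖₊ : ENNReal) ^ 2 := by
      intro s hs
      have : s ≠ u := fun h => husm (h ▸ hs)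
      simp [hF, hg, this]
    rw [h1, Finset.prod_congr rfl h2, hS,
      Finset.prod_image fun a ha b hb h => hinj ha hb h]
    have : (‖sreTerm U V t j ω‖₊ : ENNReal)
        = (∏ i ∈ Finset.Icc 1 j, (‖V (t - i) ω‖₊ : ENNReal)) * (‖U u ω‖₊ : ENNReal) := by
      rw [sreTerm, nnnorm_smul, ENNReal.coe_mul, nnnorm_prod, ENNReal.coe_finset_prod]
    rw [this, mul_pow, Finset.prod_pow, mul_comm]
  have hlint : ∀ s, ∫⁻ ω, F s ω ∂μ
      = if s = u then ∫⁻ ω, (‖U 0 ω‖₊ : ENNReal) ^ 2 ∂μ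
        else ∫⁻ ω, (‖V 0 ω‖₊ : ENNReal) ^ 2 ∂μ := by
    intro s
    have hid : IdentDistrib (F s) (g s ∘ fun ω => (U 0 ω, V 0 ω)) μ μ :=
      (hident s).comp (hgm s)
    rw [show ∫⁻ ω, F s ω ∂μ = ∫⁻ ω, (g s ∘ fun ω => (U 0 ω, V 0 ω)) ω ∂μ from hid.lintegral_eq]
    by_cases h : s = u <;> simp [h, hg]
  calc ∫⁻ ω, (‖sreTerm U V t j ω‖₊ : ENNReal) ^ 2 ∂μ
      = ∫⁻ ω, ∏ s ∈ insert u S, F s ω ∂μ := by simp_rw [hpt]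
    _ = ∏ s ∈ insert u S, ∫⁻ ω, F s ω ∂μ :=
        lintegral_finset_prod_of_iIndepFun hFindep hFm _
    _ = _ := by
        rw [Finset.prod_insert husm, hlint u, if_pos rfl, mul_comm]
        congr 1
        have : ∀ s ∈ S, ∫⁻ ω, F s ω ∂μ = ∫⁻ ω, (‖V 0 ω‖₊ : ENNReal) ^ 2 ∂μ := by
          intro s hs
          rw [hlint s, if_neg (by rintro rfl; exact husm hs)]
        rw [Finset.prod_congr rfl this, Finset.prod_const,
          Finset.card_image_of_injOn hinj, Nat.card_Icc]
        simp

/-- Existence and second-order stationarity of the solution of the linear SRE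
`Y_{t+1} = U_t + V_t Y_t` for i.i.d. pairs `(U_t, V_t)` with `𝔼‖U₀‖² < ∞` and
`𝔼[V₀²] < 1`: the series `Y_t = Σ_{j≥0} (∏_{i=1}^j V_{t-i}) U_{t-j-1}` converges a.s.
and in `L²`, has finite second moment, and a.s. satisfies the recursion. -/
theorem linear_sre_second_order_solution
    {Ω : Type*} [MeasurableSpace Ω] (μ : Measure Ω) [IsProbabilityMeasure μ]
    {d : ℕ} (U : ℤ → Ω → EuclideanSpace ℝ (Fin d)) (V : ℤ → Ω → ℝ)
    (hmeas : ∀ t : ℤ, Measurable fun ω => (U t ω, V t ω))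
    (hindep : iIndepFun (fun t ω => (U t ω, V t ω)) μ)
    (hident : ∀ t : ℤ, IdentDistrib (fun ω => (U t ω, V t ω)) (fun ω => (U 0 ω, V 0 ω)) μ μ)
    (hU2 : Integrable (fun ω => ‖U 0 ω‖ ^ 2) μ)
    (hV2 : Integrable (fun ω => (V 0 ω) ^ 2) μ)
    (hVlt : ∫ ω, (V 0 ω) ^ 2 ∂μ < 1)
    (Y : ℤ → Ω → EuclideanSpace ℝ (Fin d))
    (hY : ∀ t ω, Y t ω =
      ∑' j : ℕ, (∏ i ∈ Finset.Icc 1 j, V (t - i) ω) • U (t - (j + 1)) ω) :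
    (∀ t : ℤ, ∀ᵐ ω ∂μ, Summable fun j : ℕ =>
        (∏ i ∈ Finset.Icc 1 j, V (t - i) ω) • U (t - (j + 1)) ω) ∧
    (∀ t : ℤ, Tendsto (fun n : ℕ =>
        eLpNorm (fun ω => Y t ω - ∑ j ∈ Finset.range n,
          (∏ i ∈ Finset.Icc 1 j, V (t - i) ω) • U (t - (j + 1)) ω) 2 μ)
        atTop (nhds 0)) ∧
    (∀ t : ℤ, Integrable (fun ω => ‖Y t ω‖ ^ 2) μ) ∧
    (∀ᵐ ω ∂μ, ∀ t : ℤ, Y (t + 1) ω = U t ω + V t ω • Y t ω) := by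
  classical
  have hUm : ∀ s, Measurable (U s) := fun s => (hmeas s).fst
  have hVm : ∀ s, Measurable (V s) := fun s => (hmeas s).snd
  have hTm : ∀ t j, Measurable (sreTerm U V t j) := fun t j =>
    (Finset.measurable_prod _ fun i _ => hVm _).smul (hUm _)
  set A : ENNReal := ∫⁻ ω, (‖V 0 ω‖₊ : ENNReal) ^ 2 ∂μ with hA
  set B : ENNReal := ∫⁻ ω, (‖U 0 ω‖₊ : ENNReal) ^ 2 ∂μ with hB
  have hA1 : A < 1 := by
    have hpt : ∀ ω, ((‖V 0 ω‖₊ : ENNReal)) ^ 2 = ENNReal.ofReal ((V 0 ω) ^ 2) := by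
      intro ω
      rw [← sq_abs, ← Real.norm_eq_abs, ENNReal.ofReal_pow (norm_nonneg _),
        ofReal_norm, enorm_eq_nnnorm]
    have : A = ENNReal.ofReal (∫ ω, (V 0 ω) ^ 2 ∂μ) := by
      rw [hA]
      simp_rw [hpt]
      exact (ofReal_integral_eq_lintegral_ofReal hV2 (ae_of_all _ fun ω => sq_nonneg _)).symm
    rw [this]
    exact ENNReal.ofReal_lt_one.mpr hVlt
  have hBfin : B ≠ ⊤ := by
    have hpt : ∀ ω, ((‖U 0 ω‖₊ : ENNReal)) ^ 2 = ENNReal.ofReal (‖U 0 ω‖ ^ 2) := by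
      intro ω
      rw [ENNReal.ofReal_pow (norm_nonneg _), ofReal_norm, enorm_eq_nnnorm]
    have : B = ENNReal.ofReal (∫ ω, ‖U 0 ω‖ ^ 2 ∂μ) := by
      rw [hB]
      simp_rw [hpt]
      exact (ofReal_integral_eq_lintegral_ofReal hU2
        (ae_of_all _ fun ω => sq_nonneg _)).symm
    rw [this]
    exact ENNReal.ofReal_ne_top
  have key : ∀ (t : ℤ) (j : ℕ),
      ∫⁻ ω, (‖sreTerm U V t j ω‖₊ : ENNReal) ^ 2 ∂μ = A ^ j * B :=
    fun t j => sre_moment hmeas hindep hident t j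
  -- `eLpNorm` at 2 in terms of the quadratic lintegral
  have elp : ∀ f : Ω → EuclideanSpace ℝ (Fin d),
      eLpNorm f 2 μ = (∫⁻ ω, (‖f ω‖₊ : ENNReal) ^ 2 ∂μ) ^ (1 / 2 : ℝ) := by
    intro f
    rw [eLpNorm_eq_lintegral_rpow_enorm_toReal (by norm_num) (by norm_num)]
    have h2 : ∀ x : ENNReal, x ^ ((2:ENNReal).toReal) = x ^ (2:ℕ) := fun x => by
      rw [ENNReal.toReal_ofNat, ← ENNReal.rpow_natCast]; norm_num
    simp_rw [h2, ENNReal.toReal_ofNat, enorm_eq_nnnorm]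
  set c : ℕ → ENNReal := fun j => (A ^ j * B) ^ (1 / 2 : ℝ) with hcdef
  have hc : ∀ t j, eLpNorm (sreTerm U V t j) 2 μ = c j := by
    intro t j
    rw [elp, key]
  have hcsum : ∑' j, c j ≠ ⊤ := by
    have hr : A ^ (1 / 2 : ℝ) < 1 := ENNReal.rpow_lt_one hA1 (by norm_num)
    have hcj : ∀ j, c j = (A ^ (1 / 2 : ℝ)) ^ j * B ^ (1 / 2 : ℝ) := by
      intro j
      show (A ^ j * B) ^ (1 / 2 : ℝ) = _
      rw [ENNReal.mul_rpow_of_nonneg _ _ (by norm_num : (0:ℝ) ≤ 1 / 2)]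
      congr 1
      rw [← ENNReal.rpow_natCast A j, ← ENNReal.rpow_mul,
        ← ENNReal.rpow_natCast (A ^ (1 / 2 : ℝ)) j, ← ENNReal.rpow_mul]
      ring_nf
    rw [tsum_congr hcj, ENNReal.tsum_mul_right, ENNReal.tsum_geometric]
    exact ENNReal.mul_ne_top (ENNReal.inv_ne_top.mpr (tsub_pos_of_lt hr).ne')
      (ENNReal.rpow_ne_top_of_nonneg (by norm_num) hBfin)
  -- a.s. summability
  have hsumm : ∀ t : ℤ, ∀ᵐ ω ∂μ, Summable fun j : ℕ => sreTerm U V t j ω := by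
    intro t
    have hmeasj : ∀ j : ℕ, Measurable fun ω => (‖sreTerm U V t j ω‖₊ : ENNReal) :=
      fun j => (hTm t j).nnnorm.coe_nnreal_ennreal
    have hlt : ∫⁻ ω, ∑' j, (‖sreTerm U V t j ω‖₊ : ENNReal) ∂μ < ⊤ := by
      rw [lintegral_tsum fun j => (hmeasj j).aemeasurable]
      refine lt_of_le_of_lt (ENNReal.tsum_le_tsum fun j => ?_) hcsum.lt_top
      calc ∫⁻ ω, (‖sreTerm U V t j ω‖₊ : ENNReal) ∂μ
          = eLpNorm (sreTerm U V t j) 1 μ := (eLpNorm_one_eq_lintegral_enorm (f := sreTerm U V t j)).symm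
        _ ≤ eLpNorm (sreTerm U V t j) 2 μ :=
            eLpNorm_le_eLpNorm_of_exponent_le (by norm_num) (hTm t j).aestronglyMeasurable
        _ = c j := hc t j
    filter_upwards [ae_lt_top (Measurable.ennreal_tsum hmeasj) hlt.ne] with ω hω
    exact (ENNReal.tsum_coe_ne_top_iff_summable.mp hω.ne).of_nnnorm
  -- partial sums
  have hSm : ∀ (t : ℤ) (n : ℕ), Measurable fun ω => ∑ j ∈ Finset.range n, sreTerm U V t j ω :=
    fun t n => Finset.measurable_sum _ fun j _ => hTm t j
  have hYlim : ∀ t : ℤ, ∀ᵐ ω ∂μ,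
      Tendsto (fun m => ∑ j ∈ Finset.range m, sreTerm U V t j ω) atTop (nhds (Y t ω)) := by
    intro t
    filter_upwards [hsumm t] with ω hω
    rw [hY t ω]
    exact hω.hasSum.tendsto_sum_nat
  have hsq : ∀ f : Ω → EuclideanSpace ℝ (Fin d),
      ∫⁻ ω, (‖f ω‖₊ : ENNReal) ^ 2 ∂μ = (eLpNorm f 2 μ) ^ (2 : ℕ) := by
    intro f
    rw [elp, ← ENNReal.rpow_natCast _ 2, ← ENNReal.rpow_mul]
    norm_num
  -- L² distance bound
  have hbound : ∀ (t : ℤ) (n : ℕ),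
      eLpNorm (fun ω => Y t ω - ∑ j ∈ Finset.range n, sreTerm U V t j ω) 2 μ
        ≤ ∑' j, c (j + n) := by
    intro t n
    have hSdiff : ∀ m, n ≤ m →
        eLpNorm (fun ω => (∑ j ∈ Finset.range m, sreTerm U V t j ω)
          - ∑ j ∈ Finset.range n, sreTerm U V t j ω) 2 μ ≤ ∑' j, c (j + n) := by
      intro m hnm
      have h1 : (fun ω => (∑ j ∈ Finset.range m, sreTerm U V t j ω)
            - ∑ j ∈ Finset.range n, sreTerm U V t j ω)
          = fun ω => ∑ j ∈ Finset.Ico n m, sreTerm U V t j ω := by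
        funext ω
        rw [Finset.sum_Ico_eq_sub _ hnm]
      rw [h1]
      calc eLpNorm (fun ω => ∑ j ∈ Finset.Ico n m, sreTerm U V t j ω) 2 μ
          ≤ ∑ j ∈ Finset.Ico n m, eLpNorm (sreTerm U V t j) 2 μ := by
            simpa [Finset.sum_fn] using
              eLpNorm_sum_le (μ := μ) (p := 2) (s := Finset.Ico n m)
                (f := fun j => sreTerm U V t j)
                (fun j _ => (hTm t j).aestronglyMeasurable) (by norm_num)
        _ = ∑ j ∈ Finset.Ico n m, c j := Finset.sum_congr rfl fun j _ => hc t j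
        _ ≤ ∑' j, c (j + n) := by
            rw [Finset.sum_Ico_eq_sum_range]
            have hre : ∀ k, c (n + k) = c (k + n) := fun k => by rw [add_comm]
            calc ∑ k ∈ Finset.range (m - n), c (n + k)
                = ∑ k ∈ Finset.range (m - n), c (k + n) :=
                  Finset.sum_congr rfl fun k _ => hre k
              _ ≤ ∑' k, c (k + n) := ENNReal.sum_le_tsum _
    have hptw : ∀ᵐ ω ∂μ,
        (‖Y t ω - ∑ j ∈ Finset.range n, sreTerm U V t j ω‖₊ : ENNReal) ^ 2
        = liminf (fun m => (‖(∑ j ∈ Finset.range m, sreTerm U V t j ω)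
            - ∑ j ∈ Finset.range n, sreTerm U V t j ω‖₊ : ENNReal) ^ 2) atTop := by
      filter_upwards [hYlim t] with ω hω
      have ht : Tendsto (fun m => (‖(∑ j ∈ Finset.range m, sreTerm U V t j ω)
            - ∑ j ∈ Finset.range n, sreTerm U V t j ω‖₊ : ENNReal) ^ 2) atTop
          (nhds ((‖Y t ω - ∑ j ∈ Finset.range n, sreTerm U V t j ω‖₊ : ENNReal) ^ 2)) := by
        exact (ENNReal.continuous_pow 2).continuousAt.tendsto.comp
          (ENNReal.tendsto_coe.mpr ((hω.sub tendsto_const_nhds).nnnorm))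
      exact ht.liminf_eq.symm
    calc eLpNorm (fun ω => Y t ω - ∑ j ∈ Finset.range n, sreTerm U V t j ω) 2 μ
        = (∫⁻ ω, (‖Y t ω - ∑ j ∈ Finset.range n, sreTerm U V t j ω‖₊ : ENNReal) ^ 2 ∂μ)
            ^ (1 / 2 : ℝ) := elp _
      _ ≤ ((∑' j, c (j + n)) ^ (2 : ℕ)) ^ (1 / 2 : ℝ) := by
          apply ENNReal.rpow_le_rpow _ (by norm_num : (0:ℝ) ≤ 1 / 2)
          calc ∫⁻ ω, (‖Y t ω - ∑ j ∈ Finset.range n, sreTerm U V t j ω‖₊ : ENNReal) ^ 2 ∂μ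
              = ∫⁻ ω, liminf (fun m => (‖(∑ j ∈ Finset.range m, sreTerm U V t j ω)
                  - ∑ j ∈ Finset.range n, sreTerm U V t j ω‖₊ : ENNReal) ^ 2) atTop ∂μ :=
                lintegral_congr_ae hptw
            _ ≤ liminf (fun m => ∫⁻ ω, (‖(∑ j ∈ Finset.range m, sreTerm U V t j ω)
                  - ∑ j ∈ Finset.range n, sreTerm U V t j ω‖₊ : ENNReal) ^ 2 ∂μ) atTop :=
                lintegral_liminf_le fun m =>
                  (((hSm t m).sub (hSm t n)).nnnorm.coe_nnreal_ennreal).pow_const 2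
            _ ≤ (∑' j, c (j + n)) ^ (2 : ℕ) := by
                apply liminf_le_of_frequently_le'
                refine ((eventually_ge_atTop n).mono fun m hm => ?_).frequently
                rw [hsq]
                exact pow_le_pow_left₀ zero_le (hSdiff m hm) 2
      _ = ∑' j, c (j + n) := by
          rw [← ENNReal.rpow_natCast _ 2, ← ENNReal.rpow_mul]
          norm_num
  refine ⟨hsumm, ?_, ?_, ?_⟩
  · intro t
    have htail : Tendsto (fun n => ∑' j, c (j + n)) atTop (nhds 0) :=
      ENNReal.tendsto_sum_nat_add c hcsum
    exact tendsto_of_tendsto_of_tendsto_of_le_of_le tendsto_const_nhds htail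
      (fun n => zero_le) (fun n => hbound t n)
  · intro t
    have hasm : AEStronglyMeasurable (Y t) μ :=
      aestronglyMeasurable_of_tendsto_ae atTop
        (fun m => (hSm t m).aestronglyMeasurable) (hYlim t)
    have hfin : eLpNorm (Y t) 2 μ < ⊤ := by
      have h0 := hbound t 0
      have he : (fun ω => Y t ω - ∑ j ∈ Finset.range 0, sreTerm U V t j ω) = Y t := by
        funext ω; simp
      rw [he] at h0
      refine lt_of_le_of_lt h0 ?_
      have : (fun j : ℕ => c (j + 0)) = c := by funext j; simp
      rw [this]
      exact hcsum.lt_top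
    have hmem : MemLp (Y t) 2 μ := ⟨hasm, hfin⟩
    have hint := hmem.integrable_norm_rpow two_ne_zero ENNReal.ofNat_ne_top
    have heq : (fun ω => ‖Y t ω‖ ^ ((2 : ENNReal).toReal)) = fun ω => ‖Y t ω‖ ^ 2 := by
      funext ω
      rw [ENNReal.toReal_ofNat, show (2:ℝ) = ((2:ℕ):ℝ) by norm_num, Real.rpow_natCast]
    rwa [heq] at hint
  · have hstep : ∀ (t : ℤ) (j : ℕ) (ω : Ω),
        sreTerm U V (t + 1) (j + 1) ω = V t ω • sreTerm U V t j ω := by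
      intro t j ω
      rw [sreTerm, sreTerm, smul_smul]
      have harg : (t + 1 : ℤ) - ((j : ℤ) + 1 + 1) = t - ((j : ℤ) + 1) := by ring
      have hprod : ∏ i ∈ Finset.Icc 1 (j + 1), V (t + 1 - (i : ℤ)) ω
          = V t ω * ∏ i ∈ Finset.Icc 1 j, V (t - (i : ℤ)) ω := by
        rw [← Finset.Ico_add_one_right_eq_Icc, ← Finset.Ico_add_one_right_eq_Icc, Finset.prod_Ico_eq_prod_range,
          Finset.prod_Ico_eq_prod_range]
        simp only [Nat.add_sub_cancel]
        rw [Finset.prod_range_succ', mul_comm (V t ω)]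
        congr 1
        · apply Finset.prod_congr rfl
          intro k _
          congr 1
          push_cast
          ring
        · congr 1
          push_cast
          ring
      rw [hprod]
      have harg2 : (t + 1 : ℤ) - ((((j + 1) : ℕ) : ℤ) + 1) = t - ((j : ℤ) + 1) := by
        push_cast
        ring
      rw [harg2]
    have hae : ∀ᵐ ω ∂μ, ∀ t : ℤ, Summable fun j => sreTerm U V t j ω :=
      (ae_all_iff).2 hsumm
    filter_upwards [hae] with ω hω
    intro t
    rw [hY (t + 1) ω, hY t ω]
    show (∑' j : ℕ, sreTerm U V (t + 1) j ω)
      = U t ω + V t ω • ∑' j : ℕ, sreTerm U V t j ω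
    rw [Summable.tsum_eq_zero_add (hω (t + 1))]
    congr 1
    · show (∏ i ∈ Finset.Icc 1 0, V (t + 1 - (i : ℤ)) ω) • U (t + 1 - ((0:ℕ) + 1)) ω = U t ω
      simp
    · rw [tsum_congr fun j => hstep t j ω, tsum_const_smul'' (V t ω)]
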